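/- For all integers n, k with 1 ≤ k ≤ n−1, the binomial coefficient satisfies C(n, k) > (1/(exp(1/6)·√(2π))) · 2ⁿ · exp(−n·D(k/n ‖ 1/2)) · √(n/(k·(n−k))). -/

import Mathlib

open Real

/-- Kullback–Leibler divergence between `Bernoulli(p)` and `Bernoulli(q)`
(with the convention `0 · ln 0 = 0`, since `Real.log 0 = 0`, this agrees with
the extension by continuity to `p ∈ {0,1}`). -/
noncomputable def bernKL (p q : ℝ) : ℝ :=
  p * Real.log (p / q) + (1 - p) * Real.log ((1 - p) / (1 - q))

/-- Lower bound on binomial coefficients via Stirling's approximation: for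
`1 ≤ k ≤ n − 1`,
`C(n,k) > (1/(e^{1/6}√(2π))) · 2ⁿ · exp(−n·D(k/n ‖ 1/2)) · √(n/(k(n−k)))`. -/
lemma sqrtpi_le_stirlingSeq (m : ℕ) (hm : 1 ≤ m) :
    Real.sqrt π ≤ Stirling.stirlingSeq m := by
  obtain ⟨j, rfl⟩ := Nat.exists_eq_add_of_le hm
  have ht : Filter.Tendsto (Stirling.stirlingSeq ∘ Nat.succ) Filter.atTop (nhds (Real.sqrt π)) :=
    Stirling.tendsto_stirlingSeq_sqrt_pi.comp (Filter.tendsto_add_atTop_nat 1)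
  have := Stirling.stirlingSeq'_antitone.le_of_tendsto ht j
  simpa [Nat.succ_eq_add_one, Nat.add_comm] using this

lemma stirlingSeq_le_one' (m : ℕ) (hm : 1 ≤ m) :
    Stirling.stirlingSeq m ≤ Real.exp 1 / Real.sqrt 2 := by
  obtain ⟨j, rfl⟩ := Nat.exists_eq_add_of_le hm
  have := Stirling.stirlingSeq'_antitone (Nat.zero_le j)
  simpa [Nat.succ_eq_add_one, Nat.add_comm] using this

lemma fact_lb (m : ℕ) (hm : 1 ≤ m) :
    Real.sqrt π * (Real.sqrt (2 * m) * ((m : ℝ) / Real.exp 1) ^ m) ≤ (m.factorial : ℝ) := by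
  have hm' : (0:ℝ) < m := by exact_mod_cast hm
  have hd : 0 < Real.sqrt (2 * m) * ((m : ℝ) / Real.exp 1) ^ m := by positivity
  have h := sqrtpi_le_stirlingSeq m hm
  rw [Stirling.stirlingSeq, le_div_iff₀ hd] at h
  linarith

lemma fact_ub (m : ℕ) (hm : 1 ≤ m) :
    (m.factorial : ℝ) ≤ Real.exp 1 / Real.sqrt 2 * (Real.sqrt (2 * m) * ((m : ℝ) / Real.exp 1) ^ m) := by
  have hm' : (0:ℝ) < m := by exact_mod_cast hm
  have hd : 0 < Real.sqrt (2 * m) * ((m : ℝ) / Real.exp 1) ^ m := by positivity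
  have h := stirlingSeq_le_one' m hm
  rw [Stirling.stirlingSeq, div_le_iff₀ hd] at h
  linarith

lemma const_lt : 1/(Real.exp (1/6) * Real.sqrt (2*π)) < Real.sqrt (2*π) / (Real.exp 1)^2 := by
  have hexp : Real.exp (11/6) < 2*π := by
    have h6 : Real.exp (11/6) ^ 6 = Real.exp 1 ^ 11 := by
      rw [← Real.exp_nat_mul, ← Real.exp_nat_mul]; norm_num
    have he : Real.exp 1 ^ 11 < 2.7182818286 ^ 11 :=
      pow_lt_pow_left₀ Real.exp_one_lt_d9 (le_of_lt (Real.exp_pos 1)) (by norm_num)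
    have hpi : (3.141592:ℝ) ^ 6 < π ^ 6 :=
      pow_lt_pow_left₀ Real.pi_gt_d6 (by norm_num) (by norm_num)
    have hnum : (2.7182818286:ℝ)^11 < 64 * 3.141592^6 := by norm_num
    have hlt : Real.exp (11/6) ^ 6 < (2*π)^6 := by
      rw [h6, mul_pow]
      calc Real.exp 1 ^ 11 < 2.7182818286^11 := he
        _ < 64 * 3.141592^6 := hnum
        _ ≤ (2:ℝ)^6 * π^6 := by nlinarith
    exact lt_of_pow_lt_pow_left₀ 6 (by positivity) hlt
  rw [div_lt_div_iff₀ (by positivity) (by positivity)]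
  have hs : Real.sqrt (2*π) * Real.sqrt (2*π) = 2*π := Real.mul_self_sqrt (by positivity)
  have h2 : (Real.exp 1)^2 = Real.exp (1/6) * Real.exp (11/6) := by
    rw [← Real.exp_add, ← Real.exp_nat_mul]; norm_num
  have hp := Real.exp_pos (1/6 : ℝ)
  nlinarith

theorem choose_lower_bound_kl (n k : ℕ) (hk1 : 1 ≤ k) (hk2 : k ≤ n - 1) :
    (n.choose k : ℝ) >
      1 / (Real.exp (1 / 6) * Real.sqrt (2 * π)) * 2 ^ n *
        Real.exp (-(n : ℝ) * bernKL ((k : ℝ) / n) (1 / 2)) *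
        Real.sqrt ((n : ℝ) / ((k : ℝ) * ((n : ℝ) - k))) := by
  obtain ⟨b, rfl⟩ : ∃ b, n = k + b := ⟨n - k, by omega⟩
  have hb1 : 1 ≤ b := by omega
  have hK : (1:ℝ) ≤ (k:ℝ) := by exact_mod_cast hk1
  have hB : (1:ℝ) ≤ (b:ℝ) := by exact_mod_cast hb1
  have hK0 : (0:ℝ) < k := by linarith
  have hB0 : (0:ℝ) < b := by linarith
  have hN0 : (0:ℝ) < (k:ℝ) + b := by linarith
  have hNc : ((k + b : ℕ) : ℝ) = (k:ℝ) + b := by push_cast; ring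
  set K : ℝ := (k:ℝ)
  set B : ℝ := (b:ℝ)
  set N : ℝ := K + B with hN
  -- claim A
  have h1mp : 1 - K / N = B / N := by rw [hN]; field_simp; ring
  have hA : (2:ℝ) ^ (k + b) * Real.exp (-((k+b:ℕ) : ℝ) * bernKL (K / (k+b:ℕ)) (1 / 2))
      = N ^ (k + b) / (K ^ k * B ^ b) := by
    rw [hNc]
    have hlog : -(N) * bernKL (K / N) (1 / 2)
        = -(K * Real.log (2*K/N)) + -(B * Real.log (2*B/N)) := by
      rw [bernKL, h1mp]
      have e1 : K / N / (1/2) = 2*K/N := by ring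
      have e2 : B / N / (1 - 1/2) = 2*B/N := by ring
      rw [e1, e2, hN]
      field_simp
      ring
    rw [hlog, Real.exp_add]
    have hx : (0:ℝ) < 2*K/N := by positivity
    have hy : (0:ℝ) < 2*B/N := by positivity
    have e1 : Real.exp (-(K * Real.log (2*K/N))) = ((2*K/N) ^ k)⁻¹ := by
      rw [← Real.log_pow, Real.exp_neg, Real.exp_log (by positivity)]
    have e2 : Real.exp (-(B * Real.log (2*B/N))) = ((2*B/N) ^ b)⁻¹ := by
      rw [← Real.log_pow, Real.exp_neg, Real.exp_log (by positivity)]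
    rw [e1, e2, pow_add, pow_add, div_pow, div_pow, mul_pow, mul_pow]
    have hNk : N ^ k ≠ 0 := by positivity
    have hNb : N ^ b ≠ 0 := by positivity
    field_simp
  -- factorial bounds
  have hfn := fact_lb (k+b) (by omega)
  have hfk := fact_ub k hk1
  have hfb := fact_ub b hb1
  rw [hNc] at hfn
  have hchoose : (((k+b).choose k : ℕ) : ℝ)
      = ((k+b).factorial : ℝ) / ((k.factorial : ℝ) * (b.factorial : ℝ)) := by
    rw [Nat.cast_choose ℝ (Nat.le_add_right k b)]
    simp
  have hUBk : (0:ℝ) < Real.exp 1 / Real.sqrt 2 * (Real.sqrt (2*K) * (K/Real.exp 1)^k) := by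
    positivity
  have hden : (0:ℝ) < (k.factorial : ℝ) * (b.factorial : ℝ) := by positivity
  have hstep : Real.sqrt π * (Real.sqrt (2*N) * (N/Real.exp 1)^(k+b)) /
      ((Real.exp 1 / Real.sqrt 2 * (Real.sqrt (2*K) * (K/Real.exp 1)^k)) *
       (Real.exp 1 / Real.sqrt 2 * (Real.sqrt (2*B) * (B/Real.exp 1)^b)))
      ≤ (((k+b).choose k : ℕ) : ℝ) := by
    rw [hchoose]
    exact div_le_div₀ (by positivity) hfn hden
      (mul_le_mul hfk hfb (by positivity) (le_of_lt hUBk))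
  have hsqK : Real.sqrt K ≠ 0 := ne_of_gt (Real.sqrt_pos.mpr hK0)
  have hsqB : Real.sqrt B ≠ 0 := ne_of_gt (Real.sqrt_pos.mpr hB0)
  have hsqN : Real.sqrt N ≠ 0 := ne_of_gt (Real.sqrt_pos.mpr hN0)
  have hsq2 : Real.sqrt 2 ≠ 0 := by positivity
  have heq : Real.sqrt π * (Real.sqrt (2*N) * (N/Real.exp 1)^(k+b)) /
      ((Real.exp 1 / Real.sqrt 2 * (Real.sqrt (2*K) * (K/Real.exp 1)^k)) *
       (Real.exp 1 / Real.sqrt 2 * (Real.sqrt (2*B) * (B/Real.exp 1)^b)))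
      = Real.sqrt (2*π) / (Real.exp 1)^2 * (N^(k+b)/(K^k*B^b)) * Real.sqrt (N/(K*B)) := by
    rw [Real.sqrt_mul (by norm_num : (0:ℝ) ≤ 2) N,
        Real.sqrt_mul (by norm_num : (0:ℝ) ≤ 2) K,
        Real.sqrt_mul (by norm_num : (0:ℝ) ≤ 2) B,
        Real.sqrt_mul (by norm_num : (0:ℝ) ≤ 2) π,
        Real.sqrt_div (le_of_lt hN0), Real.sqrt_mul (le_of_lt hK0) B,
        div_pow, div_pow, div_pow, pow_add (Real.exp 1)]
    have hKk : K ^ k ≠ 0 := by positivity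
    have hBb : B ^ b ≠ 0 := by positivity
    have hek : Real.exp 1 ^ k ≠ 0 := by positivity
    have heb : Real.exp 1 ^ b ≠ 0 := by positivity
    field_simp
  have hXpos : (0:ℝ) < N^(k+b)/(K^k*B^b) := by positivity
  have hSpos : (0:ℝ) < Real.sqrt (N/(K*B)) := Real.sqrt_pos.mpr (by positivity)
  have hlt : 1/(Real.exp (1/6) * Real.sqrt (2*π)) * (N^(k+b)/(K^k*B^b)) * Real.sqrt (N/(K*B))
      < Real.sqrt (2*π)/(Real.exp 1)^2 * (N^(k+b)/(K^k*B^b)) * Real.sqrt (N/(K*B)) :=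
    mul_lt_mul_of_pos_right (mul_lt_mul_of_pos_right const_lt hXpos) hSpos
  rw [heq] at hstep
  have hNKB : N - K = B := by rw [hN]; ring
  calc 1 / (Real.exp (1 / 6) * Real.sqrt (2 * π)) * 2 ^ (k + b) *
        Real.exp (-((k+b : ℕ) : ℝ) * bernKL (K / ((k+b:ℕ):ℝ)) (1 / 2)) *
        Real.sqrt (((k+b:ℕ):ℝ) / (K * (((k+b:ℕ):ℝ) - K)))
      = 1/(Real.exp (1/6) * Real.sqrt (2*π)) * (N^(k+b)/(K^k*B^b)) * Real.sqrt (N/(K*B)) := by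
        rw [mul_assoc (1 / (Real.exp (1 / 6) * Real.sqrt (2 * π))), hA, hNc, hNKB]
    _ < Real.sqrt (2*π)/(Real.exp 1)^2 * (N^(k+b)/(K^k*B^b)) * Real.sqrt (N/(K*B)) := hlt
    _ ≤ (((k+b).choose k : ℕ) : ℝ) := hstep
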